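/- For a directed graph G with unit-capacity edges, source r, and λ* = min over nonempty cuts C ⊊ V with r ∈ C of |{(a,b) ∈ E : a ∈ C, b ∉ C}|, the broadcast capacity of the mini-slot model measured per slot (one slot = m mini-slots) is at most λ*: for any policy π, min_{i ∈ V} lim inf_T R_i^π(T)/T ≤ λ* (with T counted in slots), almost surely. -/

import Mathlib

open MeasureTheory Filter ProbabilityTheory Topology

private lemma cut_growth_bound {V : Type*} [DecidableEq V]
    (E : Finset (V × V)) (r : V) (S : ℕ → V × V) (H : ℕ → V → Set ℕ)
    (C : Finset V) (hrC : r ∈ C)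
    (hS_mem : ∀ t, S t ∈ E)
    (h0 : ∀ v, v ≠ r → H 0 v = ∅)
    (hstep : ∀ t v, v ≠ r → ∃ X : Set ℕ, X.Subsingleton ∧
      (∀ p ∈ X, (S (t + 1)).2 = v ∧ p ∈ H t (S (t + 1)).1) ∧
      H (t + 1) v ⊆ H t v ∪ X) :
    ∀ t, (⋃ v ∈ {v : V | v ∉ C}, H t v).Finite ∧
      (⋃ v ∈ {v : V | v ∉ C}, H t v).ncard ≤
        ∑ s ∈ Finset.range t,
          (if S (s+1) ∈ E.filter (fun e => e.1 ∈ C ∧ e.2 ∉ C) then 1 else 0) := by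
  intro t
  induction t with
  | zero =>
    have : (⋃ v ∈ {v : V | v ∉ C}, H 0 v) = ∅ := by
      apply Set.eq_empty_iff_forall_notMem.2
      intro p hp
      simp only [Set.mem_iUnion, Set.mem_setOf_eq] at hp
      obtain ⟨v, hv, hpv⟩ := hp
      rw [h0 v (fun h => hv (h ▸ hrC))] at hpv
      exact hpv
    rw [this]
    simp
  | succ t ih =>
    obtain ⟨ihfin, ihcard⟩ := ih
    set U : Set ℕ := ⋃ v ∈ {v : V | v ∉ C}, H t v with hU
    choose X hXsub hXmem hXsubset using fun v (hv : v ∉ C) =>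
      hstep t v (fun h => hv (h ▸ hrC))
    set e := S (t+1) with he
    by_cases hcut : e ∈ E.filter (fun e => e.1 ∈ C ∧ e.2 ∉ C)
    · -- crossing edge : union grows by at most one element
      have hsub : (⋃ v ∈ {v : V | v ∉ C}, H (t+1) v) ⊆
          U ∪ (if h : e.2 ∉ C then X e.2 h else ∅) := by
        intro p hp
        simp only [Set.mem_iUnion, Set.mem_setOf_eq] at hp
        obtain ⟨v, hv, hpv⟩ := hp
        rcases hXsubset v hv hpv with h | h
        · exact Or.inl (Set.mem_biUnion hv h)
        · have h2 := (hXmem v hv p h).1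
          subst h2
          rw [dif_pos hv]
          exact Or.inr h
      have hXfin : (if h : e.2 ∉ C then X e.2 h else ∅).Finite := by
        split
        · exact Set.Subsingleton.finite (hXsub _ _)
        · exact Set.finite_empty
      have hXcard : (if h : e.2 ∉ C then X e.2 h else ∅).ncard ≤ 1 := by
        split
        · exact (Set.ncard_le_one ((hXsub _ _).finite)).2
            (fun a ha b hb => hXsub _ _ ha hb)
        · simp
      constructor
      · exact Set.Finite.subset (ihfin.union hXfin) hsub
      · calc (⋃ v ∈ {v : V | v ∉ C}, H (t+1) v).ncard
            ≤ (U ∪ (if h : e.2 ∉ C then X e.2 h else ∅)).ncard :=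
              Set.ncard_le_ncard hsub (ihfin.union hXfin)
          _ ≤ U.ncard + (if h : e.2 ∉ C then X e.2 h else ∅).ncard :=
              Set.ncard_union_le _ _
          _ ≤ (∑ s ∈ Finset.range t,
                (if S (s+1) ∈ E.filter (fun e => e.1 ∈ C ∧ e.2 ∉ C) then 1 else 0)) + 1 := by
              omega
          _ = ∑ s ∈ Finset.range (t+1),
                (if S (s+1) ∈ E.filter (fun e => e.1 ∈ C ∧ e.2 ∉ C) then 1 else 0) := by
              rw [Finset.sum_range_succ, if_pos hcut]
    · -- non-crossing edge : no growth
      have hsub : (⋃ v ∈ {v : V | v ∉ C}, H (t+1) v) ⊆ U := by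
        intro p hp
        simp only [Set.mem_iUnion, Set.mem_setOf_eq] at hp
        obtain ⟨v, hv, hpv⟩ := hp
        rcases hXsubset v hv hpv with h | h
        · exact Set.mem_biUnion hv h
        · obtain ⟨h2, hsrc⟩ := hXmem v hv p h
          have heE : e ∈ E := hS_mem (t+1)
          have : e.1 ∉ C := by
            intro h1
            exact hcut (Finset.mem_filter.2 ⟨heE, h1, h2 ▸ hv⟩)
          exact Set.mem_biUnion this hsrc
      refine ⟨ihfin.subset hsub, ?_⟩
      calc (⋃ v ∈ {v : V | v ∉ C}, H (t+1) v).ncard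
          ≤ U.ncard := Set.ncard_le_ncard hsub ihfin
        _ ≤ _ := le_trans ihcard (by
            rw [Finset.sum_range_succ, if_neg hcut]
            simp)

private lemma slln_uniform_edges {Ω : Type*} [MeasurableSpace Ω]
    (P : Measure Ω) [IsProbabilityMeasure P]
    {V : Type*} [Fintype V] [DecidableEq V]
    [MeasurableSpace (V × V)] [MeasurableSingletonClass (V × V)]
    (E : Finset (V × V)) (S : ℕ → Ω → V × V)
    (hS_mem : ∀ t ω, S t ω ∈ E)
    (hmeas : ∀ t, Measurable (S t))
    (hindep : iIndepFun S P)
    (hunif : ∀ (t : ℕ), ∀ e ∈ E, P {ω | S t ω = e} = 1 / E.card)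
    (F : Finset (V × V)) (hFE : F ⊆ E) (hE : E.Nonempty) :
    ∀ᵐ ω ∂P, Tendsto
      (fun n : ℕ => (∑ s ∈ Finset.range n,
          (if S s ω ∈ F then (1:ℝ) else 0)) / n) atTop
      (𝓝 ((F.card : ℝ) / E.card)) := by
  classical
  have hm : (0:ℕ) < E.card := Finset.card_pos.2 hE
  set φ : V × V → ℝ := fun e => if e ∈ F then 1 else 0 with hφ
  have hφm : Measurable φ := measurable_of_countable φ
  set X : ℕ → Ω → ℝ := fun t ω => φ (S t ω) with hX
  have hident : ∀ t, IdentDistrib (X t) (X 0) P P := by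
    intro t
    have hS : IdentDistrib (S t) (S 0) P P := by
      refine ⟨(hmeas t).aemeasurable, (hmeas 0).aemeasurable, ?_⟩
      apply MeasureTheory.Measure.ext_of_singleton
      intro e
      rw [Measure.map_apply (hmeas t) (measurableSet_singleton e),
        Measure.map_apply (hmeas 0) (measurableSet_singleton e)]
      by_cases he : e ∈ E
      · have h1 := hunif t e he
        have h2 := hunif 0 e he
        have e1 : S t ⁻¹' {e} = {ω | S t ω = e} := by ext ω; simp
        have e2 : S 0 ⁻¹' {e} = {ω | S 0 ω = e} := by ext ω; simp
        rw [e1, e2, h1, h2]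
      · have e1 : S t ⁻¹' {e} = ∅ := by
          ext ω; simp only [Set.mem_preimage, Set.mem_singleton_iff]
          exact ⟨fun h => absurd (h ▸ hS_mem t ω) he, fun h => h.elim⟩
        have e2 : S 0 ⁻¹' {e} = ∅ := by
          ext ω; simp only [Set.mem_preimage, Set.mem_singleton_iff]
          exact ⟨fun h => absurd (h ▸ hS_mem 0 ω) he, fun h => h.elim⟩
        simp [e1, e2]
    exact hS.comp hφm
  have hpair : Pairwise (Function.onFun (IndepFun · · P) X) := by
    intro s t hst
    exact (hindep.indepFun hst).comp hφm hφm
  have hA : MeasurableSet (S 0 ⁻¹' ↑F) := hmeas 0 (F.finite_toSet.measurableSet)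
  have hX0 : X 0 = (S 0 ⁻¹' ↑F).indicator (fun _ => (1:ℝ)) := by
    funext ω
    by_cases h : S 0 ω ∈ F <;> simp [hX, hφ, Set.indicator, h]
  have hint : Integrable (X 0) P := by
    rw [hX0]
    exact (integrable_const (1:ℝ)).indicator hA
  have hPA : P (S 0 ⁻¹' ↑F) = F.card * (1 / E.card) := by
    have hdecomp : S 0 ⁻¹' ↑F = ⋃ e ∈ F, S 0 ⁻¹' {e} := by
      ext ω; simp
    rw [hdecomp, measure_biUnion_finset]
    · rw [Finset.sum_congr rfl (fun e he => ?_), Finset.sum_const, nsmul_eq_mul]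
      have e1 : S 0 ⁻¹' {e} = {ω | S 0 ω = e} := by ext ω; simp
      rw [e1, hunif 0 e (hFE he)]
    · intro a _ b _ hab
      simp only [Function.onFun]
      apply Disjoint.preimage
      simp [hab]
    · intro e _
      exact hmeas 0 (measurableSet_singleton e)
  have hmean : ∫ ω, X 0 ω ∂P = (F.card : ℝ) / E.card := by
    rw [hX0, integral_indicator_const _ hA, measureReal_def, hPA, smul_eq_mul, mul_one]
    rw [ENNReal.toReal_mul]
    simp only [one_div]
    rw [ENNReal.toReal_inv]
    simp [div_eq_mul_inv]
  have := strong_law_ae_real X hint hpair hident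
  rw [hmean] at this
  exact this

/-- in the mini-slot model (one slot = `m = |E|` mini-slots),
the broadcast rate of any policy, measured per slot, is bounded a.s. by
`lamstar`, the minimum size of a cut separating the source `r` from some
node.  The policy model is as in Statement 15. -/
theorem broadcast_capacity_upper_bound {Ω : Type*} [MeasurableSpace Ω]
    (P : Measure Ω) [IsProbabilityMeasure P]
    {V : Type*} [Fintype V] [DecidableEq V]
    [MeasurableSpace (V × V)] [MeasurableSingletonClass (V × V)]
    (E : Finset (V × V)) (r : V)
    (S : ℕ → Ω → V × V) (H : ℕ → Ω → V → Set ℕ)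
    (hS_mem : ∀ t ω, S t ω ∈ E)
    (hmeas : ∀ t, Measurable (S t))
    (hindep : iIndepFun S P)
    (hunif : ∀ (t : ℕ), ∀ e ∈ E, P {ω | S t ω = e} = 1 / E.card)
    (h0 : ∀ ω v, v ≠ r → H 0 ω v = ∅)
    (hstep : ∀ t ω v, v ≠ r → ∃ X : Set ℕ, X.Subsingleton ∧
      (∀ p ∈ X, (S (t + 1) ω).2 = v ∧ p ∈ H t ω (S (t + 1) ω).1) ∧
      H (t + 1) ω v ⊆ H t ω v ∪ X)
    (lamstar : ℕ)
    (hlam : IsLeast {k : ℕ | ∃ C : Finset V, r ∈ C ∧ C ≠ Finset.univ ∧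
      k = (E.filter (fun e => e.1 ∈ C ∧ e.2 ∉ C)).card} lamstar) :
    ∀ᵐ ω ∂P, ∃ i : V,
      liminf (fun T : ℕ => ((H (E.card * T) ω i).ncard : ℝ) / T) atTop ≤
        (lamstar : ℝ) := by
  classical
  -- Ω is nonempty (probability measure), hence E is nonempty
  have hΩ : Nonempty Ω := by
    by_contra h
    rw [not_nonempty_iff] at h
    have h1 : P Set.univ = 1 := measure_univ
    rw [Set.univ_eq_empty_iff.2 h, measure_empty] at h1
    exact zero_ne_one h1
  obtain ⟨ω0⟩ := hΩ
  have hE : E.Nonempty := ⟨S 0 ω0, hS_mem 0 ω0⟩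
  have hm : (0:ℕ) < E.card := Finset.card_pos.2 hE
  set m := E.card with hmdef
  -- the optimal cut
  obtain ⟨C, hrC, hCne, hCcard⟩ := hlam.1
  obtain ⟨i, hiC⟩ : ∃ i : V, i ∉ C := by
    by_contra h
    push_neg at h
    exact hCne (Finset.eq_univ_iff_forall.2 h)
  set F : Finset (V × V) := E.filter (fun e => e.1 ∈ C ∧ e.2 ∉ C) with hF
  have hFE : F ⊆ E := Finset.filter_subset _ _
  -- almost sure SLLN event
  filter_upwards [slln_uniform_edges P E S hS_mem hmeas hindep hunif F hFE hE]
    with ω hω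
  refine ⟨i, ?_⟩
  -- abbreviations
  set c : ℕ → ℝ := fun n => ∑ s ∈ Finset.range n,
    (if S s ω ∈ F then (1:ℝ) else 0) with hc
  have hcnonneg : ∀ n, 0 ≤ c n := by
    intro n
    apply Finset.sum_nonneg
    intro s _
    split <;> norm_num
  -- combinatorial bound
  have hcomb := cut_growth_bound E r (fun t => S t ω) (fun t => H t ω) C hrC
    (fun t => hS_mem t ω) (fun v hv => h0 ω v hv) (fun t v hv => hstep t ω v hv)
  have hHsub : ∀ t, ((H t ω i).ncard : ℝ) ≤ c (t + 1) := by
    intro t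
    have h1 : H t ω i ⊆ ⋃ v ∈ {v : V | v ∉ C}, H t ω v :=
      Set.subset_biUnion_of_mem (show i ∈ {v : V | v ∉ C} from hiC)
    have h2 : (H t ω i).ncard ≤ (⋃ v ∈ {v : V | v ∉ C}, H t ω v).ncard :=
      Set.ncard_le_ncard h1 (hcomb t).1
    have h3 := le_trans h2 (hcomb t).2
    have h4 : ((∑ s ∈ Finset.range t,
        (if S (s+1) ω ∈ F then (1:ℕ) else 0) : ℕ) : ℝ) =
        ∑ s ∈ Finset.range t, (if S (s+1) ω ∈ F then (1:ℝ) else 0) := by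
      push_cast [apply_ite (Nat.cast : ℕ → ℝ)]
      rfl
    have h5 : ((H t ω i).ncard : ℝ) ≤
        ∑ s ∈ Finset.range t, (if S (s+1) ω ∈ F then (1:ℝ) else 0) := by
      rw [← h4]
      exact_mod_cast h3
    refine le_trans h5 ?_
    have hsucc : c (t+1) = (∑ s ∈ Finset.range t,
        (if S (s+1) ω ∈ F then (1:ℝ) else 0)) + (if S 0 ω ∈ F then (1:ℝ) else 0) :=
      Finset.sum_range_succ' (fun s => if S s ω ∈ F then (1:ℝ) else 0) t
    rw [hsucc]
    have : (0:ℝ) ≤ if S 0 ω ∈ F then (1:ℝ) else 0 := by split <;> norm_num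
    linarith
  -- the comparison sequence and its limit
  set g : ℕ → ℝ := fun T => c (m * T + 1) / T with hg
  have hmT : Tendsto (fun T : ℕ => m * T + 1) atTop atTop := by
    apply tendsto_atTop_mono (fun T => ?_) tendsto_id
    simp only [id_eq]
    calc T ≤ m * T := Nat.le_mul_of_pos_left T hm
      _ ≤ m * T + 1 := Nat.le_succ _
  have h1 : Tendsto (fun T : ℕ => c (m * T + 1) / (m * T + 1 : ℕ)) atTop
      (𝓝 ((F.card : ℝ) / E.card)) := hω.comp hmT
  have h2 : Tendsto (fun T : ℕ => ((m * T + 1 : ℕ) : ℝ) / T) atTop (𝓝 m) := by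
    have ha : Tendsto (fun T : ℕ => (m : ℝ) + 1 / T) atTop (𝓝 ((m : ℝ) + 0)) :=
      tendsto_const_nhds.add tendsto_one_div_atTop_nhds_zero_nat
    rw [add_zero] at ha
    apply ha.congr'
    filter_upwards [eventually_ge_atTop 1] with T hT
    have hT0 : (T : ℝ) ≠ 0 := by
      simp only [ne_eq, Nat.cast_eq_zero]
      omega
    push_cast
    field_simp
  have hglim : Tendsto g atTop (𝓝 (lamstar : ℝ)) := by
    have hmul := h1.mul h2
    have hE0 : (E.card : ℝ) ≠ 0 := Nat.cast_ne_zero.2 hm.ne'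
    have hval : (F.card : ℝ) / E.card * m = lamstar := by
      rw [hCcard]
      show (F.card : ℝ) / E.card * E.card = F.card
      field_simp
    rw [hval] at hmul
    apply hmul.congr'
    filter_upwards [eventually_ge_atTop 1] with T hT
    have hT0 : (T : ℝ) ≠ 0 := by
      simp only [ne_eq, Nat.cast_eq_zero]
      omega
    have hmT0 : ((m * T + 1 : ℕ) : ℝ) ≠ 0 := by positivity
    simp only [hg]
    field_simp
  -- compare liminfs
  have hfg : ∀ᶠ T : ℕ in atTop,
      ((H (m * T) ω i).ncard : ℝ) / T ≤ g T := by
    filter_upwards [eventually_ge_atTop 1] with T hT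
    have hT0 : (0:ℝ) ≤ T := by positivity
    simp only [hg]
    gcongr
    exact hHsub (m * T)
  have hu : IsBoundedUnder (· ≥ ·) atTop
      (fun T : ℕ => ((H (m * T) ω i).ncard : ℝ) / T) :=
    isBoundedUnder_of ⟨0, fun T => by positivity⟩
  have hv : IsCoboundedUnder (· ≥ ·) atTop g :=
    hglim.isBoundedUnder_le.isCoboundedUnder_ge
  calc liminf (fun T : ℕ => ((H (m * T) ω i).ncard : ℝ) / T) atTop
      ≤ liminf g atTop := liminf_le_liminf hfg hu hv
    _ = (lamstar : ℝ) := hglim.liminf_eq
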